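/- The 3-cycle rule is not sound for the relation ≈_max: there exists a finite probabilistic team X with functions x_0, x_1, x_2, x_3 such that =(x_0,x_1), x_1 ≈_max x_2, =(x_2,x_3), and x_3 ≈_max x_0 all hold, but =(x_1,x_0) does not hold. (Witness: the uniform distribution over the four tuples (0,0,0,0), (1,0,0,0), (2,1,1,1), (2,1,2,1) for (x_0,x_1,x_2,x_3).) -/

import Mathlib

/-- Functional dependency `=(f,g)`. -/
def FD {X A B : Type*} (f : X → A) (g : X → B) : Prop :=
  ∀ s s', f s = f s' → g s = g s'

/-- The maximum marginal probability of `f` (as an element of `WithBot ℝ`). -/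
noncomputable def maxMarg {X A : Type*} [Fintype X] [DecidableEq A]
    (P : X → ℝ) (f : X → A) : WithBot ℝ :=
  ((Finset.univ.image f).image
    (fun a => ∑ s ∈ Finset.univ.filter (fun s => f s = a), P s)).max

/-- `f ≈_max g`. -/
noncomputable def MaxRel {X A B : Type*} [Fintype X] [DecidableEq A] [DecidableEq B]
    (P : X → ℝ) (f : X → A) (g : X → B) : Prop :=
  maxMarg P f = maxMarg P g

theorem stmt_8 :
    ∃ (X : Type) (_ : Fintype X) (_ : Nonempty X) (P : X → ℝ)
      (x0 x1 x2 x3 : X → ℕ),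
      (∀ s, 0 < P s) ∧ (∑ s, P s = 1) ∧
      FD x0 x1 ∧ MaxRel P x1 x2 ∧ FD x2 x3 ∧ MaxRel P x3 x0 ∧
      ¬ FD x1 x0 := by
  refine ⟨Fin 4, inferInstance, inferInstance, fun _ => 1/4,
    ![0,1,2,2], ![0,0,1,1], ![0,0,1,2], ![0,0,1,1], ?_, ?_, ?_, ?_, ?_, ?_, ?_⟩
  · intro s; norm_num
  · simp [Fin.sum_univ_four]
  · intro s s'; fin_cases s <;> fin_cases s' <;> simp
  · show maxMarg _ _ = maxMarg _ _
    rw [maxMarg, maxMarg,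
      show (Finset.univ.image ![0,0,1,1] : Finset ℕ) = {0,1} from by decide,
      show (Finset.univ.image ![0,0,1,2] : Finset ℕ) = {0,1,2} from by decide]
    simp only [Finset.image_insert, Finset.image_singleton, Finset.sum_filter, Fin.sum_univ_four]
    norm_num
    simp [Matrix.cons_val_succ', Matrix.cons_val_zero, Matrix.cons_val_one, ← WithBot.coe_add]
    norm_num
  · intro s s'; fin_cases s <;> fin_cases s' <;> simp
  · show maxMarg _ _ = maxMarg _ _
    rw [maxMarg, maxMarg,
      show (Finset.univ.image ![0,0,1,1] : Finset ℕ) = {0,1} from by decide,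
      show (Finset.univ.image ![0,1,2,2] : Finset ℕ) = {0,1,2} from by decide]
    simp only [Finset.image_insert, Finset.image_singleton, Finset.sum_filter, Fin.sum_univ_four]
    norm_num
    simp [Matrix.cons_val_succ', Matrix.cons_val_zero, Matrix.cons_val_one, ← WithBot.coe_add]
    norm_num
  · intro h
    have := h 0 1 (by simp)
    simp at this
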